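/- arXiv:2111.11275 — 2 statements merged into one kernel-verified Lean document; each statement's English description precedes it below -/
import Mathlib

section
/- Every maximally commutative subset C of ℤ_d × ℤ_d equals either C_{0,0} := {(0,y) : y ∈ ℤ_d} or C_{i,j} := {(x,y) : iy − jx ≡ 0 (mod d), x ∈ iℤ_d} for some nonzero i dividing d and some 0 ≤ j < d/i. -/
/-- The set `C_{i,j} = {(x,y) ∈ ℤ_d × ℤ_d : i y − j x ≡ 0 (mod d), x ∈ iℤ_d}`. -/
def Cij {d : ℕ} (i j : ZMod d) : Set (ZMod d × ZMod d) :=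
  {p | i * p.2 - j * p.1 = 0 ∧ ∃ k : ZMod d, p.1 = i * k}

/-- Maximal commutativity for subsets of `ℤ_d × ℤ_d`. -/
def IsMaxComm {d : ℕ} (C : Set (ZMod d × ZMod d)) : Prop :=
  (∀ p ∈ C, ∀ q ∈ C, p.1 * q.2 - q.1 * p.2 = 0) ∧
  (∀ p : ZMod d × ZMod d, (∀ q ∈ C, p.1 * q.2 - q.1 * p.2 = 0) → p ∈ C)

lemma combo_mem {d : ℕ} {C : Set (ZMod d × ZMod d)} (hC : IsMaxComm C)
    {p p' : ZMod d × ZMod d} (hp : p ∈ C) (hp' : p' ∈ C) (c c' : ZMod d) :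
    (c * p.1 + c' * p'.1, c * p.2 + c' * p'.2) ∈ C := by
  apply hC.2
  intro q hq
  have h1 := hC.1 p hp q hq
  have h2 := hC.1 p' hp' q hq
  simp only []
  linear_combination c * h1 + c' * h2

lemma bezout_cast (d a b : ℕ) :
    ∃ A B : ZMod d, ((Nat.gcd a b : ℕ) : ZMod d) = A * (a : ZMod d) + B * (b : ZMod d) := by
  refine ⟨((Nat.gcdA a b : ℤ) : ZMod d), ((Nat.gcdB a b : ℤ) : ZMod d), ?_⟩
  have h := Nat.gcd_eq_gcd_ab a b
  have h2 := congrArg (fun z : ℤ => (z : ZMod d)) h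
  push_cast at h2
  linear_combination h2

/-- Every maximally commutative subset of `ℤ_d × ℤ_d` is `C_{0,0} = {(0,y)}` or
`C_{i,j}` for some nonzero divisor `i` of `d` and `0 ≤ j < d/i`. -/
theorem maxComm_structure (d : ℕ) (hd : 3 ≤ d)
    (C : Set (ZMod d × ZMod d)) (hC : IsMaxComm C) :
    C = {p : ZMod d × ZMod d | p.1 = 0} ∨
      ∃ i j : ℕ, i ∣ d ∧ 0 < i ∧ i < d ∧ j < d / i ∧
        C = Cij (i : ZMod d) (j : ZMod d) := by
  classical
  haveI : NeZero d := ⟨by omega⟩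
  by_cases h0 : ∀ p ∈ C, p.1 = 0
  · left
    ext p
    constructor
    · intro hp; exact h0 p hp
    · intro hp
      apply hC.2
      intro q hq
      have : p.1 = 0 := hp
      rw [this, h0 q hq]
      ring
  · right
    push_neg at h0
    obtain ⟨p₀, hp₀, hp₀1⟩ := h0
    have hNex : ∃ n : ℕ, 0 < n ∧ ∃ y, ((n : ZMod d), y) ∈ C := by
      refine ⟨p₀.1.val, ?_, p₀.2, ?_⟩
      · exact (ZMod.val_pos).2 hp₀1
      · rw [ZMod.natCast_val, ZMod.cast_id]
        exact hp₀
    set i := Nat.find hNex with hidef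
    obtain ⟨hipos, y₀, hy₀⟩ := Nat.find_spec hNex
    -- key: any natural appearing (mod d) as a first coordinate is divisible by i
    have key : ∀ m : ℕ, (∃ y, ((m : ZMod d), y) ∈ C) → i ∣ m := by
      intro m ⟨y, hy⟩
      obtain ⟨A, B, hAB⟩ := bezout_cast d i m
      have hg : 0 < Nat.gcd i m ∧ ∃ y', ((Nat.gcd i m : ZMod d), y') ∈ C := by
        refine ⟨Nat.gcd_pos_of_pos_left m hipos, A * y₀ + B * y, ?_⟩
        have := combo_mem hC hy₀ hy A B
        simpa [hAB] using this
      have hle : i ≤ Nat.gcd i m := Nat.find_min' hNex hg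
      have hge : Nat.gcd i m ≤ i := Nat.le_of_dvd hipos (Nat.gcd_dvd_left i m)
      have : Nat.gcd i m = i := le_antisymm hge hle
      exact this ▸ Nat.gcd_dvd_right i m
    have hzero : ((0 : ZMod d), (0 : ZMod d)) ∈ C := by
      apply hC.2; intro q hq; simp
    have hid : i ∣ d := by
      apply key d
      exact ⟨0, by simpa using hzero⟩
    have hilt : i < d := by
      have h1 : i ≤ p₀.1.val := by
        apply Nat.find_min' hNex
        refine ⟨(ZMod.val_pos).2 hp₀1, p₀.2, ?_⟩
        rw [ZMod.natCast_val, ZMod.cast_id]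
        exact hp₀
      exact lt_of_le_of_lt h1 (ZMod.val_lt p₀.1)
    have hdipos : 0 < d / i := Nat.div_pos (Nat.le_of_dvd (by omega) hid) hipos
    set j := y₀.val % (d / i) with hjdef
    have hjlt : j < d / i := Nat.mod_lt _ hdipos
    -- i * y₀ = i * j in ZMod d
    have hij : (i : ZMod d) * y₀ = (i : ZMod d) * (j : ZMod d) := by
      have hsplit : (d / i) * (y₀.val / (d / i)) + j = y₀.val := Nat.div_add_mod _ _
      have h1 : (i : ZMod d) * y₀ = ((i * y₀.val : ℕ) : ZMod d) := by
        push_cast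
        rw [ZMod.natCast_val, ZMod.cast_id]
      have h2 : i * y₀.val = d * (y₀.val / (d / i)) + i * j := by
        calc i * y₀.val = i * ((d / i) * (y₀.val / (d / i)) + j) := by rw [hsplit]
          _ = (i * (d / i)) * (y₀.val / (d / i)) + i * j := by ring
          _ = d * (y₀.val / (d / i)) + i * j := by rw [Nat.mul_div_cancel' hid]
      rw [h1, h2]
      push_cast
      simp
    -- divisibility of first coordinates by (i : ZMod d)
    have hdvd : ∀ q ∈ C, ∃ k : ZMod d, q.1 = (i : ZMod d) * k := by
      intro q hq
      have hm : i ∣ q.1.val := by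
        apply key
        refine ⟨q.2, ?_⟩
        rw [ZMod.natCast_val, ZMod.cast_id]
        exact hq
      refine ⟨((q.1.val / i : ℕ) : ZMod d), ?_⟩
      have : (i * (q.1.val / i) : ℕ) = q.1.val := Nat.mul_div_cancel' hm
      calc q.1 = ((q.1.val : ℕ) : ZMod d) := by rw [ZMod.natCast_val, ZMod.cast_id]
        _ = ((i * (q.1.val / i) : ℕ) : ZMod d) := by rw [this]
        _ = (i : ZMod d) * ((q.1.val / i : ℕ) : ZMod d) := by push_cast; ring
    have hsub : ∀ q ∈ C, (i : ZMod d) * q.2 - (j : ZMod d) * q.1 = 0 ∧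
        ∃ k : ZMod d, q.1 = (i : ZMod d) * k := by
      intro q hq
      obtain ⟨k, hk⟩ := hdvd q hq
      have hcq := hC.1 q hq ((i : ZMod d), y₀) hy₀
      simp only [] at hcq
      refine ⟨?_, k, hk⟩
      rw [hk] at hcq ⊢
      linear_combination -hcq + k * hij
    refine ⟨i, j, hid, hipos, hilt, hjlt, ?_⟩
    ext p
    constructor
    · intro hp
      exact hsub p hp
    · rintro ⟨hp1, k, hk⟩
      apply hC.2
      intro q hq
      obtain ⟨hq1, m, hm⟩ := hsub q hq
      linear_combination k * hq1 - m * hp1 + q.2 * hk - q.2 * hm * 0 - p.2 * hm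
        + (j : ZMod d) * k * hm - (j : ZMod d) * m * hk
end

section
/- The number of maximally commutative subsets of ℤ_d × ℤ_d (under the relation mn' − m'n ≡ 0 mod d) is exactly σ(d), the sum of the divisors of d. -/
lemma mul_left_ker {d e : ℕ} (hd : 0 < d) (he : e ∣ d) (he0 : 0 < e) (x : ZMod d) :
    x * ((d / e : ℕ) : ZMod d) = 0 ↔ ∃ k : ZMod d, x = (e : ZMod d) * k := by
  haveI : NeZero d := ⟨hd.ne'⟩
  have hef : e * (d / e) = d := Nat.mul_div_cancel' he
  have hf0 : 0 < d / e := Nat.div_pos (Nat.le_of_dvd hd he) he0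
  constructor
  · intro h
    have hx : ((x.val : ℕ) : ZMod d) = x := ZMod.natCast_rightInverse x
    have h2 : ((x.val * (d / e) : ℕ) : ZMod d) = 0 := by push_cast; rw [hx]; exact h
    rw [ZMod.natCast_eq_zero_iff] at h2
    have hdvd : e ∣ x.val := by
      have h3 : e * (d / e) ∣ x.val * (d / e) := by rw [hef]; exact h2
      exact (Nat.mul_dvd_mul_iff_right hf0).mp h3
    have hval : ((e * (x.val / e) : ℕ) : ZMod d) = x := by
      rw [Nat.mul_div_cancel' hdvd, hx]
    refine ⟨((x.val / e : ℕ) : ZMod d), ?_⟩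
    conv_lhs => rw [← hval]
    push_cast
    ring
  · rintro ⟨k, rfl⟩
    have : ((e : ℕ) : ZMod d) * ((d / e : ℕ) : ZMod d) = 0 := by
      rw [← Nat.cast_mul, hef, ZMod.natCast_self]
    calc (e : ZMod d) * k * ((d / e : ℕ) : ZMod d)
        = ((e : ZMod d) * ((d / e : ℕ) : ZMod d)) * k := by ring
      _ = 0 := by rw [this, zero_mul]

lemma isMaxComm_Cij {d : ℕ} (hd : 3 ≤ d) {e : ℕ} (he : e ∣ d) (he0 : 0 < e) (j : ZMod d) :
    IsMaxComm (Cij (e : ZMod d) j) := by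
  have hd0 : (0:ℕ) < d := by omega
  have hef : e * (d / e) = d := Nat.mul_div_cancel' he
  have hi0 : ((e : ℕ) : ZMod d) * ((d / e : ℕ) : ZMod d) = 0 := by
    rw [← Nat.cast_mul, hef, ZMod.natCast_self]
  constructor
  · rintro ⟨p1, p2⟩ ⟨hp1, k, hk⟩ ⟨q1, q2⟩ ⟨hq1, k', hk'⟩
    simp only at hp1 hq1 hk hk' ⊢
    subst hk hk'
    linear_combination k * hq1 - k' * hp1
  · rintro ⟨p1, p2⟩ h
    have hq1 : (((e : ℕ) : ZMod d), j) ∈ Cij (e : ZMod d) j := ⟨by ring, 1, by ring⟩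
    have hq2 : ((0 : ZMod d), ((d / e : ℕ) : ZMod d)) ∈ Cij (e : ZMod d) j := by
      refine ⟨?_, 0, by ring⟩
      simp only
      rw [mul_zero, hi0, sub_zero]
    have h1 := h _ hq1
    have h2 := h _ hq2
    simp only at h1 h2
    rw [zero_mul, sub_zero] at h2
    -- h2 : p1 * (d/e) = 0
    refine ⟨?_, (mul_left_ker hd0 he he0 p1).mp h2⟩
    simp only
    linear_combination -h1

lemma Cij_congr {d : ℕ} {i j j' : ZMod d} (h : i * j = i * j') : Cij i j = Cij i j' := by
  ext p
  constructor <;> rintro ⟨h1, k, hk⟩ <;> refine ⟨?_, k, hk⟩ <;> rw [hk] at h1 ⊢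
  · linear_combination h1 + k * h
  · linear_combination h1 - k * h

lemma exists_rep {d : ℕ} (hd : 3 ≤ d) {C : Set (ZMod d × ZMod d)} (hC : IsMaxComm C) :
    ∃ e ∈ Nat.divisors d, ∃ j ∈ Finset.range (d / e), C = Cij (e : ZMod d) (j : ZMod d) := by
  have hd0 : (0:ℕ) < d := by omega
  haveI : NeZero d := ⟨hd0.ne'⟩
  obtain ⟨hC1, hC2⟩ := hC
  -- C contains 0 and is closed under addition
  have hzero : ((0 : ZMod d), (0 : ZMod d)) ∈ C := by
    apply hC2; intro q hq; simp
  have hadd : ∀ p ∈ C, ∀ p' ∈ C, (p.1 + p'.1, p.2 + p'.2) ∈ C := by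
    intro p hp p' hp'
    apply hC2; intro q hq
    have t1 := hC1 p hp q hq
    have t2 := hC1 p' hp' q hq
    simp only
    linear_combination t1 + t2
  -- natural multiples
  have hnsmul : ∀ (n : ℕ), ∀ p ∈ C, (((n : ZMod d)) * p.1, ((n : ZMod d)) * p.2) ∈ C := by
    intro n p hp
    induction n with
    | zero => simpa using hzero
    | succ m ih =>
      have := hadd _ ih p hp
      push_cast
      convert this using 2 <;> push_cast <;> ring
  have hneg : ∀ p ∈ C, (-p.1, -p.2) ∈ C := by
    intro p hp
    apply hC2; intro q hq
    have := hC1 p hp q hq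
    simp only
    linear_combination -this
  -- first projections
  set P : ZMod d → Prop := fun x => ∃ y, (x, y) ∈ C with hP
  have hGd : P ((d : ℕ) : ZMod d) := ⟨0, by rw [ZMod.natCast_self]; exact hzero⟩
  have hQ : ∃ n : ℕ, 0 < n ∧ P ((n : ℕ) : ZMod d) := ⟨d, hd0, hGd⟩
  classical
  obtain ⟨e, ⟨he0, y0, hy0⟩, hmin⟩ :
      ∃ e : ℕ, (0 < e ∧ P ((e : ℕ) : ZMod d)) ∧
        ∀ m, m < e → ¬(0 < m ∧ P ((m : ℕ) : ZMod d)) :=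
    ⟨Nat.find hQ, Nat.find_spec hQ, fun m hm => Nat.find_min hQ hm⟩
  -- every n with P (n : ZMod d) is divisible by e
  have hdvd : ∀ n : ℕ, P ((n : ℕ) : ZMod d) → e ∣ n := by
    intro n hn
    obtain ⟨y, hy⟩ := hn
    obtain ⟨y1, hy1⟩ : P ((n % e : ℕ) : ZMod d) := by
      have hmul := hnsmul (n / e) _ hy0
      have hnegmul := hneg _ hmul
      have := hadd _ hy _ hnegmul
      refine ⟨y + -(((n / e : ℕ) : ZMod d) * y0), ?_⟩
      convert this using 2
      have hid : (e : ℕ) * (n / e) + n % e = n := Nat.div_add_mod n e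
      have : ((e * (n / e) + n % e : ℕ) : ZMod d) = ((n : ℕ) : ZMod d) := by rw [hid]
      push_cast at this ⊢
      linear_combination this
    by_contra hcon
    have hr0 : 0 < n % e := Nat.pos_of_ne_zero (fun h0 => hcon (Nat.dvd_of_mod_eq_zero h0))
    exact hmin _ (Nat.mod_lt n he0) ⟨hr0, y1, hy1⟩
  have heD : e ∣ d := hdvd d hGd
  have hef : e * (d / e) = d := Nat.mul_div_cancel' heD
  have hf0 : 0 < d / e := Nat.div_pos (Nat.le_of_dvd hd0 heD) he0
  -- C = Cij e y0
  have hCeq : C = Cij ((e : ℕ) : ZMod d) y0 := by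
    ext ⟨p1, p2⟩
    constructor
    · intro hp
      have hcomm := hC1 _ hp _ hy0
      simp only at hcomm
      refine ⟨by simp only; linear_combination -hcomm, ?_⟩
      have hPp : P ((p1.val : ℕ) : ZMod d) := by
        rw [ZMod.natCast_rightInverse p1]
        exact ⟨p2, hp⟩
      obtain ⟨m, hm⟩ := hdvd _ hPp
      refine ⟨((m : ℕ) : ZMod d), ?_⟩
      simp only
      rw [← ZMod.natCast_rightInverse p1, hm]
      push_cast; ring
    · rintro ⟨h1, k, hk⟩
      apply hC2
      rintro ⟨q1, q2⟩ hq
      have hq0 := hC1 _ hq _ hy0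
      simp only at hq0 h1 hk ⊢
      have hPq : P ((q1.val : ℕ) : ZMod d) := by
        rw [ZMod.natCast_rightInverse q1]
        exact ⟨q2, hq⟩
      obtain ⟨m, hm⟩ := hdvd _ hPq
      have hq1 : q1 = ((e : ℕ) : ZMod d) * ((m : ℕ) : ZMod d) := by
        rw [← ZMod.natCast_rightInverse q1, hm]; push_cast; ring
      subst hk
      subst hq1
      linear_combination (-k) * hq0 - ((m : ℕ) : ZMod d) * h1
  -- shrink j to range
  refine ⟨e, Nat.mem_divisors.mpr ⟨heD, hd0.ne'⟩, y0.val % (d / e),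
    Finset.mem_range.mpr (Nat.mod_lt _ hf0), ?_⟩
  rw [hCeq]
  apply Cij_congr
  have hmod : e * (y0.val % (d / e)) ≡ e * y0.val [MOD e * (d / e)] :=
    (Nat.mod_modEq y0.val (d / e)).mul_left' e
  rw [hef] at hmod
  have hc : ((e * (y0.val % (d / e)) : ℕ) : ZMod d) = ((e * y0.val : ℕ) : ZMod d) :=
    (ZMod.natCast_eq_natCast_iff _ _ _).mpr hmod
  push_cast at hc
  rw [ZMod.natCast_rightInverse y0] at hc
  linear_combination -hc

lemma Cij_inj {d : ℕ} (hd : 3 ≤ d) {e e' j j' : ℕ} (he : e ∣ d) (he' : e' ∣ d)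
    (he0 : 0 < e) (he'0 : 0 < e') (hj : j < d / e) (hj' : j' < d / e')
    (h : Cij (e : ZMod d) (j : ZMod d) = Cij (e' : ZMod d) (j' : ZMod d)) :
    e = e' ∧ j = j' := by
  have hd0 : (0:ℕ) < d := by omega
  have key : ∀ a b : ℕ, a ∣ d → 0 < a → b ∣ d →
      (∃ k : ZMod d, ((b : ℕ) : ZMod d) = ((a : ℕ) : ZMod d) * k) → a ∣ b := by
    intro a b ha ha0 hb ⟨k, hk⟩
    have haf : a * (d / a) = d := Nat.mul_div_cancel' ha
    have hf0 : 0 < d / a := Nat.div_pos (Nat.le_of_dvd hd0 ha) ha0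
    have : ((b : ℕ) : ZMod d) * ((d / a : ℕ) : ZMod d) = 0 := by
      rw [hk]
      calc ((a : ℕ) : ZMod d) * k * ((d / a : ℕ) : ZMod d)
          = (((a * (d / a)) : ℕ) : ZMod d) * k := by push_cast; ring
        _ = 0 := by rw [haf, ZMod.natCast_self, zero_mul]
    rw [← Nat.cast_mul, ZMod.natCast_eq_zero_iff] at this
    have h4 : d ∣ (d / a) * b := by rwa [mul_comm b (d / a)] at this
    have h5 : (d / a) * a ∣ (d / a) * b := by
      rw [mul_comm (d / a) a, haf]; exact h4
    exact (Nat.mul_dvd_mul_iff_left hf0).mp h5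
  have hmem : (((e' : ℕ) : ZMod d), ((j' : ℕ) : ZMod d)) ∈ Cij (e : ZMod d) (j : ZMod d) := by
    rw [h]; exact ⟨by ring, 1, by ring⟩
  have hmem' : (((e : ℕ) : ZMod d), ((j : ℕ) : ZMod d)) ∈ Cij (e' : ZMod d) (j' : ZMod d) := by
    rw [← h]; exact ⟨by ring, 1, by ring⟩
  obtain ⟨hc1, k, hk⟩ := hmem
  obtain ⟨hc1', k', hk'⟩ := hmem'
  have hee' : e = e' :=
    Nat.dvd_antisymm (key e e' he he0 he' ⟨k, hk⟩) (key e' e he' he'0 he ⟨k', hk'⟩)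
  subst hee'
  refine ⟨rfl, ?_⟩
  simp only at hc1'
  have hcast : ((e * j : ℕ) : ZMod d) = ((e * j' : ℕ) : ZMod d) := by
    push_cast
    linear_combination hc1'
  have hmodeq : e * j ≡ e * j' [MOD d] := (ZMod.natCast_eq_natCast_iff _ _ _).mp hcast
  have hef : e * (d / e) = d := Nat.mul_div_cancel' he
  have hlt : e * j < d := by calc e * j < e * (d / e) := (Nat.mul_lt_mul_left he0).mpr hj
                                  _ = d := hef
  have hlt' : e * j' < d := by calc e * j' < e * (d / e) := (Nat.mul_lt_mul_left he0).mpr hj'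
                                  _ = d := hef
  have : e * j = e * j' := by
    have := hmodeq
    unfold Nat.ModEq at this
    rwa [Nat.mod_eq_of_lt hlt, Nat.mod_eq_of_lt hlt'] at this
  exact Nat.eq_of_mul_eq_mul_left he0 this

/-- The number of maximally commutative subsets of `ℤ_d × ℤ_d` equals `σ(d)`,
the sum of the divisors of `d`. -/
theorem maxComm_count (d : ℕ) (hd : 3 ≤ d) :
    {C : Set (ZMod d × ZMod d) | IsMaxComm C}.ncard = ∑ k ∈ Nat.divisors d, k := by
  classical
  have hd0 : (0:ℕ) < d := by omega
  set T : Finset ((_ : ℕ) × ℕ) := d.divisors.sigma (fun e => Finset.range (d / e)) with hT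
  set g : ((_ : ℕ) × ℕ) → Set (ZMod d × ZMod d) :=
    fun p => Cij ((p.1 : ℕ) : ZMod d) ((p.2 : ℕ) : ZMod d) with hg
  have hset : {C : Set (ZMod d × ZMod d) | IsMaxComm C} = ↑(T.image g) := by
    ext C
    simp only [Set.mem_setOf_eq, Finset.coe_image, Set.mem_image, Finset.mem_coe,
      Finset.mem_sigma, hT, hg]
    constructor
    · intro hC
      obtain ⟨e, heD, j, hj, hCeq⟩ := exists_rep hd hC
      exact ⟨⟨e, j⟩, ⟨heD, hj⟩, hCeq.symm⟩
    · rintro ⟨⟨e, j⟩, ⟨heD, hj⟩, rfl⟩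
      exact isMaxComm_Cij hd (Nat.mem_divisors.mp heD).1 (Nat.pos_of_mem_divisors heD) _
  rw [hset, Set.ncard_coe_finset]
  have hinj : Set.InjOn g ↑T := by
    rintro ⟨e, j⟩ h1 ⟨e', j'⟩ h2 heq
    simp only [Finset.mem_coe, Finset.mem_sigma, Finset.mem_range, hT] at h1 h2
    obtain ⟨hee, hjj⟩ := Cij_inj hd (Nat.mem_divisors.mp h1.1).1 (Nat.mem_divisors.mp h2.1).1
      (Nat.pos_of_mem_divisors h1.1) (Nat.pos_of_mem_divisors h2.1) h1.2 h2.2 heq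
    subst hee; subst hjj; rfl
  rw [Finset.card_image_of_injOn hinj, hT, Finset.card_sigma]
  simp only [Finset.card_range]
  exact Nat.sum_div_divisors d id
end
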